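/- Let m ∈ ℕ (m ≥ 1). Then ∑_{i=−∞}^{∞} Φ(x − i) = 1 for every x ∈ ℝ. -/

import Mathlib

open scoped BigOperators Topology
open Real Filter

/-- The algebraic sigmoid function `φ(x) = x / (1 + x^(2m))^(1/(2m))`. -/
noncomputable def phi (m : ℕ) (x : ℝ) : ℝ :=
  x / (1 + x ^ (2 * m)) ^ ((1 : ℝ) / (2 * m))

/-- The activation function `Φ(x) = (φ(x+1) - φ(x-1))/4`. -/
noncomputable def Phi (m : ℕ) (x : ℝ) : ℝ :=
  (phi m (x + 1) - phi m (x - 1)) / 4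

lemma denom_pos (m : ℕ) (x : ℝ) : (0:ℝ) < 1 + x ^ (2 * m) := by
  have : (0:ℝ) ≤ x ^ (2 * m) := (even_two_mul m).pow_nonneg x
  linarith

lemma phi_neg (m : ℕ) (x : ℝ) : phi m (-x) = - phi m x := by
  unfold phi
  rw [(even_two_mul m).neg_pow, neg_div]

lemma phi_of_nonneg (m : ℕ) (hm : 1 ≤ m) {x : ℝ} (hx : 0 ≤ x) :
    phi m x = (x ^ (2 * m) / (1 + x ^ (2 * m))) ^ ((1 : ℝ) / (2 * m)) := by
  have h0 : (0:ℝ) < 1 + x ^ (2 * m) := denom_pos m x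
  have hn : (2 * m : ℕ) ≠ 0 := by omega
  have hcast : ((1 : ℝ) / (2 * m)) = (((2 * m : ℕ) : ℝ))⁻¹ := by
    push_cast; rw [one_div]
  rw [phi, hcast, Real.div_rpow (by positivity) h0.le,
    Real.pow_rpow_inv_natCast hx hn]

lemma phi_mono (m : ℕ) (hm : 1 ≤ m) : Monotone (phi m) := by
  have key : ∀ a b : ℝ, 0 ≤ a → a ≤ b → phi m a ≤ phi m b := by
    intro a b ha hab
    have hb : 0 ≤ b := ha.trans hab
    rw [phi_of_nonneg m hm ha, phi_of_nonneg m hm hb]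
    apply Real.rpow_le_rpow (by positivity) _ (by positivity)
    rw [div_le_div_iff₀ (denom_pos m a) (denom_pos m b)]
    have hp : a ^ (2*m) ≤ b ^ (2*m) := pow_le_pow_left₀ ha hab _
    nlinarith [hp]
  intro a b hab
  rcases le_total 0 a with ha | ha
  · exact key a b ha hab
  · rcases le_total 0 b with hb | hb
    · have h1 : phi m a ≤ 0 := by
        rw [phi]
        apply div_nonpos_of_nonpos_of_nonneg ha
        exact (Real.rpow_pos_of_pos (denom_pos m a) _).le
      have h2 : 0 ≤ phi m b := by
        rw [phi]
        exact div_nonneg hb (Real.rpow_pos_of_pos (denom_pos m b) _).le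
      linarith
    · have := key (-b) (-a) (by linarith) (by linarith)
      rw [phi_neg, phi_neg] at this
      linarith

lemma phi_tendsto_atTop (m : ℕ) (hm : 1 ≤ m) :
    Tendsto (phi m) atTop (𝓝 1) := by
  have h1 : Tendsto (fun x : ℝ => 1 + x ^ (2*m)) atTop atTop := by
    apply tendsto_atTop_add_const_left
    exact tendsto_pow_atTop (by omega)
  have h2 : Tendsto (fun x : ℝ => 1 - (1 + x ^ (2*m))⁻¹) atTop (𝓝 1) := by
    simpa using tendsto_const_nhds.sub h1.inv_tendsto_atTop
  have h3 : Tendsto (fun x : ℝ => (1 - (1 + x ^ (2*m))⁻¹) ^ ((1:ℝ)/(2*m)))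
      atTop (𝓝 1) := by
    simpa using h2.rpow_const (Or.inl one_ne_zero)
  apply h3.congr'
  filter_upwards [eventually_ge_atTop (0:ℝ)] with x hx
  rw [phi_of_nonneg m hm hx]
  congr 1
  have h0 := denom_pos m x
  field_simp
  ring

lemma phi_tendsto_atBot (m : ℕ) (hm : 1 ≤ m) :
    Tendsto (phi m) atBot (𝓝 (-1)) := by
  have := ((phi_tendsto_atTop m hm).comp tendsto_neg_atBot_atTop).neg
  simp only [Function.comp] at this
  apply this.congr
  intro x
  rw [← phi_neg, neg_neg]

lemma nat_sub_tendsto_atBot (c : ℝ) :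
    Tendsto (fun N : ℕ => (c - N : ℝ)) atTop atBot := by
  have h : Tendsto (fun N : ℕ => -(N : ℝ)) atTop atBot :=
    tendsto_neg_atTop_atBot.comp tendsto_natCast_atTop_atTop
  have := tendsto_atBot_add_const_left atTop c h
  exact this.congr (fun N => by ring)

lemma nat_add_tendsto_atTop (c : ℝ) :
    Tendsto (fun N : ℕ => (c + N : ℝ)) atTop atTop := by
  exact tendsto_atTop_add_const_left atTop c tendsto_natCast_atTop_atTop

lemma tele_neg (m : ℕ) (y : ℝ) (N : ℕ) :
    ∑ n ∈ Finset.range N, (phi m (y + ((n:ℝ) + 1) + 1) - phi m (y + ((n:ℝ) + 1) - 1))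
      = phi m (y + N) + phi m (y + N + 1) - phi m y - phi m (y + 1) := by
  induction N with
  | zero => simp
  | succ N ih =>
    rw [Finset.sum_range_succ, ih]
    push_cast
    ring_nf

lemma sum_telescope2 (u : ℕ → ℝ) (N : ℕ) :
    ∑ n ∈ Finset.range N, (u (n+2) - u n) = u N + u (N+1) - u 0 - u 1 := by
  induction N with
  | zero => simp
  | succ N ih => rw [Finset.sum_range_succ, ih]; ring

theorem Phi_tsum_eq_one (m : ℕ) (hm : 1 ≤ m) (x : ℝ) :
    ∑' i : ℤ, Phi m (x - i) = 1 := by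
  set f : ℤ → ℝ := fun i => Phi m (x - i) with hf
  have hmono := phi_mono m hm
  have hnonneg : ∀ i : ℤ, 0 ≤ f i := by
    intro i
    have : phi m (x - i - 1) ≤ phi m (x - i + 1) := hmono (by linarith)
    simp only [hf, Phi]
    linarith
  -- positive part
  have hpos : HasSum (fun n : ℕ => f n)
      ((phi m (x+1) + phi m x + 2) / 4) := by
    rw [hasSum_iff_tendsto_nat_of_nonneg (fun n => hnonneg n)]
    have heq : ∀ N : ℕ, ∑ n ∈ Finset.range N, f n
        = (phi m (x+1) + phi m x - phi m (x - N + 1) - phi m (x - N)) / 4 := by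
      intro N
      have h := sum_telescope2 (fun n : ℕ => - phi m (x - n + 1)) N
      simp only [hf, Phi, ← Finset.sum_div]
      rw [show ∑ n ∈ Finset.range N, (phi m (x - (n:ℤ) + 1) - phi m (x - (n:ℤ) - 1))
          = ∑ n ∈ Finset.range N, ((fun n : ℕ => - phi m (x - n + 1)) (n+2)
            - (fun n : ℕ => - phi m (x - n + 1)) n) by
        apply Finset.sum_congr rfl
        intro n _
        push_cast
        ring_nf]
      rw [h]
      push_cast
      ring_nf
    simp only [heq]
    have hb1 : Tendsto (fun N : ℕ => phi m (x - N + 1)) atTop (𝓝 (-1)) := by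
      have := (phi_tendsto_atBot m hm).comp (nat_sub_tendsto_atBot (x + 1))
      exact this.congr (fun N => by simp [Function.comp]; ring_nf)
    have hb2 : Tendsto (fun N : ℕ => phi m (x - N)) atTop (𝓝 (-1)) :=
      (phi_tendsto_atBot m hm).comp (nat_sub_tendsto_atBot x)
    have := ((tendsto_const_nhds (x := phi m (x+1) + phi m x)
        (f := atTop (α := ℕ))).sub hb1 |>.sub hb2).div_const 4
    convert this using 2
    ring
  -- negative part
  have hneg : HasSum (fun n : ℕ => f (-(n+1)))
      ((2 - phi m (x+1) - phi m x) / 4) := by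
    rw [hasSum_iff_tendsto_nat_of_nonneg (fun n => hnonneg _)]
    have heq : ∀ N : ℕ, ∑ n ∈ Finset.range N, f (-(n+1))
        = (phi m (x + N + 1) + phi m (x + N) - phi m (x+1) - phi m x) / 4 := by
      intro N
      simp only [hf, Phi, ← Finset.sum_div]
      simp only [Int.cast_neg, Int.cast_add, Int.cast_natCast, Int.cast_one, sub_neg_eq_add]
      rw [tele_neg m x N]
      ring
    simp only [heq]
    have ht1 : Tendsto (fun N : ℕ => phi m (x + N + 1)) atTop (𝓝 1) := by
      have := (phi_tendsto_atTop m hm).comp (nat_add_tendsto_atTop (x + 1))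
      exact this.congr (fun N => by simp [Function.comp]; ring_nf)
    have ht2 : Tendsto (fun N : ℕ => phi m (x + N)) atTop (𝓝 1) :=
      (phi_tendsto_atTop m hm).comp (nat_add_tendsto_atTop x)
    have := ((ht1.add ht2).sub (tendsto_const_nhds (x := phi m (x+1) + phi m x)
        (f := atTop (α := ℕ)))).div_const 4
    convert this using 2 <;> ring
  have := (hpos.of_nat_of_neg_add_one hneg).tsum_eq
  rw [this]
  ring
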